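/- Let K ≥ 1, let δ : subsets of {1,…,K} → [0,1) be symmetric (δ_A depends only on |A|) and monotone in the sense δ_{A} ≥ δ_{B} whenever A ⊇ B. Given positive reals μ_{{1}} ≥ μ_{{2}} ≥ … ≥ μ_{{K}} and the recursive definition μ_J := max_{k ∈ J} Σ_{I : k ∈ I ⊊ J} [φ_{(J̄∪{k}), (J∖I)} / (1 - δ_{J̄∪{k}})] · μ_I for |J| ≥ 2 (where φ_{F,T} := Σ_{U⊆T} (-1)^{|U|} δ_{F∪U} is assumed nonnegative), the maximum is attained at k = min J; that is, μ_J = Σ_{I : k*_J ∈ I ⊊ J} [φ_{(J̄∪{k*_J}), (J∖I)} / (1 - δ_{J̄∪{k*_J}})] · μ_I with k*_J = min J. Moreover if J₁, J₂ have equal cardinality, J₁∖{min J₁} = J₂∖{min J₂}, and min J₁ ≤ min J₂, then μ_{J₁} ≥ μ_{J₂}. -/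

import Mathlib

/-- Lemma 1: for a symmetric, monotone erasure profile `δ` and decreasing positive
singleton lengths, the maximum in the recursive definition of `μ_J` is attained at
`k = min J`; moreover `μ` is monotone under replacing the minimal element by a
smaller one. -/
theorem stmt9 (K : ℕ) (hK : 1 ≤ K)
    (δ : Finset (Fin K) → ℝ)
    (hδ0 : ∀ A, 0 ≤ δ A) (hδ1 : ∀ A, δ A < 1)
    (hsym : ∀ A B : Finset (Fin K), A.card = B.card → δ A = δ B)
    (hmono : ∀ A B : Finset (Fin K), B ⊆ A → δ B ≤ δ A)
    (φ : Finset (Fin K) → Finset (Fin K) → ℝ)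
    (hφdef : ∀ F T : Finset (Fin K),
      φ F T = ∑ U ∈ T.powerset, (-1 : ℝ) ^ U.card * δ (F ∪ U))
    (hφpos : ∀ F T : Finset (Fin K), Disjoint F T → 0 ≤ φ F T)
    (μ : Finset (Fin K) → ℝ)
    (hμpos : ∀ k : Fin K, 0 < μ {k})
    (hμdec : ∀ k l : Fin K, k ≤ l → μ {l} ≤ μ {k})
    (hμrec : ∀ (J : Finset (Fin K)) (hJ : 2 ≤ J.card),
      μ J = J.sup' (Finset.card_pos.mp (by omega)) (fun k =>
        ∑ I ∈ J.powerset.filter (fun I => k ∈ I ∧ I ≠ J),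
          φ (Jᶜ ∪ {k}) (J \ I) / (1 - δ (Jᶜ ∪ {k})) * μ I)) :
    (∀ (J : Finset (Fin K)) (hJ : 2 ≤ J.card),
      μ J = ∑ I ∈ J.powerset.filter
          (fun I => J.min' (Finset.card_pos.mp (by omega)) ∈ I ∧ I ≠ J),
        φ (Jᶜ ∪ {J.min' (Finset.card_pos.mp (by omega))}) (J \ I) /
          (1 - δ (Jᶜ ∪ {J.min' (Finset.card_pos.mp (by omega))})) * μ I) ∧
    (∀ (J₁ J₂ : Finset (Fin K)) (h₁ : J₁.Nonempty) (h₂ : J₂.Nonempty),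
      J₁.card = J₂.card →
      J₁.erase (J₁.min' h₁) = J₂.erase (J₂.min' h₂) →
      J₁.min' h₁ ≤ J₂.min' h₂ → μ J₂ ≤ μ J₁) := by
  classical
  -- φ depends only on the cardinalities, for disjoint arguments
  have hφeq : ∀ F T F' T' : Finset (Fin K), Disjoint F T → Disjoint F' T' →
      F.card = F'.card → T.card = T'.card → φ F T = φ F' T' := by
    intro F T F' T' hd hd' hF hT
    rw [hφdef, hφdef, Finset.powerset_card_disjiUnion]; erw [Finset.sum_disjiUnion]
    rw [Finset.powerset_card_disjiUnion]; erw [Finset.sum_disjiUnion]; rw [hT]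
    refine Finset.sum_congr rfl fun j hj => ?_
    rcases le_or_gt j T'.card with hle | hlt
    · obtain ⟨U₀, hU₀⟩ := (Finset.powersetCard_nonempty (n := j) (s := T)).2 (by omega)
      obtain ⟨U₀', hU₀'⟩ := (Finset.powersetCard_nonempty (n := j) (s := T')).2 hle
      obtain ⟨hU₀T, hU₀c⟩ := Finset.mem_powersetCard.1 hU₀
      obtain ⟨hU₀T', hU₀c'⟩ := Finset.mem_powersetCard.1 hU₀'
      have hval : δ (F ∪ U₀) = δ (F' ∪ U₀') := by
        apply hsym
        rw [Finset.card_union_of_disjoint (hd.mono_right hU₀T),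
          Finset.card_union_of_disjoint (hd'.mono_right hU₀T'), hF, hU₀c, hU₀c']
      have e1 : ∀ U ∈ T.powersetCard j, (-1 : ℝ) ^ U.card * δ (F ∪ U)
          = (-1 : ℝ) ^ j * δ (F ∪ U₀) := by
        intro U hU
        obtain ⟨hUT, hUc⟩ := Finset.mem_powersetCard.1 hU
        rw [hUc]
        congr 1
        apply hsym
        rw [Finset.card_union_of_disjoint (hd.mono_right hUT),
          Finset.card_union_of_disjoint (hd.mono_right hU₀T), hUc, hU₀c]
      have e2 : ∀ U ∈ T'.powersetCard j, (-1 : ℝ) ^ U.card * δ (F' ∪ U)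
          = (-1 : ℝ) ^ j * δ (F' ∪ U₀') := by
        intro U hU
        obtain ⟨hUT, hUc⟩ := Finset.mem_powersetCard.1 hU
        rw [hUc]
        congr 1
        apply hsym
        rw [Finset.card_union_of_disjoint (hd'.mono_right hUT),
          Finset.card_union_of_disjoint (hd'.mono_right hU₀T'), hUc, hU₀c']
      rw [Finset.sum_congr rfl e1, Finset.sum_congr rfl e2, Finset.sum_const,
        Finset.sum_const, Finset.card_powersetCard, Finset.card_powersetCard, hT, hval]
    · rw [Finset.powersetCard_eq_empty.2 (by omega), Finset.powersetCard_eq_empty.2 (by omega)]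
      simp
  have hcompl : ∀ (J : Finset (Fin K)) (j : Fin K), j ∈ J →
      (Jᶜ ∪ {j}).card = K - J.card + 1 := by
    intro J j hj
    rw [Finset.card_union_of_disjoint (by simp [hj]), Finset.card_compl,
      Finset.card_singleton, Fintype.card_fin]
  -- the key comparison lemma between two sums, given a μ-dominating bijection
  have key : ∀ (J₁ J₂ : Finset (Fin K)), J₁.card = J₂.card → 2 ≤ J₂.card →
      ∀ j₁, j₁ ∈ J₁ → ∀ j₂, j₂ ∈ J₂ → ∀ e e' : Finset (Fin K) → Finset (Fin K),
      (∀ S, S ∈ J₂.powerset.filter (fun I => j₂ ∈ I ∧ I ≠ J₂) →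
        (e S ∈ J₁.powerset.filter (fun I => j₁ ∈ I ∧ I ≠ J₁) ∧ (e S).card = S.card ∧
          e' (e S) = S ∧ μ S ≤ μ (e S))) →
      (∀ S, S ∈ J₁.powerset.filter (fun I => j₁ ∈ I ∧ I ≠ J₁) →
        (e' S ∈ J₂.powerset.filter (fun I => j₂ ∈ I ∧ I ≠ J₂) ∧ e (e' S) = S)) →
      (∑ I ∈ J₂.powerset.filter (fun I => j₂ ∈ I ∧ I ≠ J₂),
          φ (J₂ᶜ ∪ {j₂}) (J₂ \ I) / (1 - δ (J₂ᶜ ∪ {j₂})) * μ I) ≤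
      (∑ I ∈ J₁.powerset.filter (fun I => j₁ ∈ I ∧ I ≠ J₁),
          φ (J₁ᶜ ∪ {j₁}) (J₁ \ I) / (1 - δ (J₁ᶜ ∪ {j₁})) * μ I) := by
    intro J₁ J₂ hc h2 j₁ hj₁ j₂ hj₂ e e' he he'
    have hδeq : δ (J₂ᶜ ∪ {j₂}) = δ (J₁ᶜ ∪ {j₁}) := by
      apply hsym
      rw [hcompl J₂ j₂ hj₂, hcompl J₁ j₁ hj₁, hc]
    have hden : (0 : ℝ) < 1 - δ (J₁ᶜ ∪ {j₁}) := by linarith [hδ1 (J₁ᶜ ∪ {j₁})]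
    calc (∑ I ∈ J₂.powerset.filter (fun I => j₂ ∈ I ∧ I ≠ J₂),
            φ (J₂ᶜ ∪ {j₂}) (J₂ \ I) / (1 - δ (J₂ᶜ ∪ {j₂})) * μ I)
        ≤ ∑ I ∈ J₂.powerset.filter (fun I => j₂ ∈ I ∧ I ≠ J₂),
            φ (J₁ᶜ ∪ {j₁}) (J₁ \ e I) / (1 - δ (J₁ᶜ ∪ {j₁})) * μ (e I) := by
          apply Finset.sum_le_sum
          intro S hS
          obtain ⟨hSp, hj₂S, hSne⟩ := Finset.mem_filter.1 hS
          have hSsub : S ⊆ J₂ := Finset.mem_powerset.1 hSp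
          obtain ⟨heS, hecard, -, hemu⟩ := he S hS
          obtain ⟨heSp, hj₁eS, heSne⟩ := Finset.mem_filter.1 heS
          have heSsub : e S ⊆ J₁ := Finset.mem_powerset.1 heSp
          have hd2 : Disjoint (J₂ᶜ ∪ {j₂}) (J₂ \ S) := by
            rw [Finset.disjoint_union_left]
            constructor
            · exact disjoint_compl_left.mono_right (Finset.sdiff_subset)
            · simp [Finset.disjoint_singleton_left, Finset.mem_sdiff, hj₂S]
          have hd1 : Disjoint (J₁ᶜ ∪ {j₁}) (J₁ \ e S) := by
            rw [Finset.disjoint_union_left]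
            constructor
            · exact disjoint_compl_left.mono_right (Finset.sdiff_subset)
            · simp [Finset.disjoint_singleton_left, Finset.mem_sdiff, hj₁eS]
          have hφe : φ (J₂ᶜ ∪ {j₂}) (J₂ \ S) = φ (J₁ᶜ ∪ {j₁}) (J₁ \ e S) := by
            apply hφeq _ _ _ _ hd2 hd1
            · rw [hcompl J₂ j₂ hj₂, hcompl J₁ j₁ hj₁, hc]
            · rw [Finset.card_sdiff_of_subset hSsub, Finset.card_sdiff_of_subset heSsub, hc, hecard]
          rw [hφe, hδeq]
          have hcoef : 0 ≤ φ (J₁ᶜ ∪ {j₁}) (J₁ \ e S) / (1 - δ (J₁ᶜ ∪ {j₁})) :=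
            div_nonneg (hφpos _ _ hd1) (le_of_lt hden)
          exact mul_le_mul_of_nonneg_left hemu hcoef
      _ = ∑ I ∈ J₁.powerset.filter (fun I => j₁ ∈ I ∧ I ≠ J₁),
            φ (J₁ᶜ ∪ {j₁}) (J₁ \ I) / (1 - δ (J₁ᶜ ∪ {j₁})) * μ I := by
          refine Finset.sum_nbij' e e' (fun S hS => (he S hS).1) (fun S hS => (he' S hS).1)
            (fun S hS => (he S hS).2.2.1) (fun S hS => (he' S hS).2) (fun S hS => rfl)
  -- Claim A: replacing an element of I by a smaller element outside I increases μ
  have claimA : ∀ n (I : Finset (Fin K)), I.card ≤ n → ∀ k, k ∈ I → ∀ m, m ≤ k → m ∉ I →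
      μ I ≤ μ (insert m (I.erase k)) := by
    intro n
    induction n with
    | zero =>
      intro I hI k hk
      have : 0 < I.card := Finset.card_pos.2 ⟨k, hk⟩
      omega
    | succ n ih =>
      intro I hIn k hk m hmk hmI
      have hmk' : m ≠ k := fun h => hmI (h ▸ hk)
      have hmek : m ∉ I.erase k := fun h => hmI (Finset.mem_of_mem_erase h)
      have hknJ₁ : k ∉ insert m (I.erase k) := by
        simp [Finset.mem_insert, Ne.symm hmk']
      have h1le : 1 ≤ I.card := Finset.card_pos.2 ⟨k, hk⟩
      have hcard : (insert m (I.erase k)).card = I.card := by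
        rw [Finset.card_insert_of_notMem hmek, Finset.card_erase_of_mem hk]
        omega
      by_cases h1 : I.card = 1
      · obtain ⟨a, ha⟩ := Finset.card_eq_one.1 h1
        have hak : a = k := by
          have := hk; rw [ha, Finset.mem_singleton] at this; exact this.symm
        subst hak
        have hins : insert m ((∅ : Finset (Fin K))) = {m} := by simp
        rw [ha, Finset.erase_singleton, hins]
        exact hμdec m a hmk
      · have h2 : 2 ≤ I.card := by omega
        rw [hμrec I h2, hμrec (insert m (I.erase k)) (by rw [hcard]; exact h2)]
        apply Finset.sup'_le
        intro j hj
        have hjm : j ≠ m := fun h => hmI (h ▸ hj)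
        have hj' : (if j = k then m else j) ∈ insert m (I.erase k) := by
          by_cases hjk : j = k
          · simp [hjk]
          · simp only [hjk, if_false]
            exact Finset.mem_insert_of_mem (Finset.mem_erase.2 ⟨hjk, hj⟩)
        refine le_trans ?_ (Finset.le_sup' _ hj')
        apply key (insert m (I.erase k)) I hcard h2 _ hj' j hj
          (fun S => if k ∈ S then insert m (S.erase k) else S)
          (fun S => if m ∈ S then insert k (S.erase m) else S)
        · -- forward direction
          intro S hS
          obtain ⟨hSp, hjS, hSne⟩ := Finset.mem_filter.1 hS
          have hSsub : S ⊆ I := Finset.mem_powerset.1 hSp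
          have hmS : m ∉ S := fun h => hmI (hSsub h)
          have hSlt : S.card < I.card :=
            Finset.card_lt_card (Finset.ssubset_iff_subset_ne.2 ⟨hSsub, hSne⟩)
          by_cases hkS : k ∈ S
          · have hmSe : m ∉ S.erase k := fun h => hmS (Finset.mem_of_mem_erase h)
            have h1S : 1 ≤ S.card := Finset.card_pos.2 ⟨k, hkS⟩
            have hcS : (insert m (S.erase k)).card = S.card := by
              rw [Finset.card_insert_of_notMem hmSe, Finset.card_erase_of_mem hkS]
              omega
            simp only [if_pos hkS]
            refine ⟨?_, hcS, ?_, ?_⟩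
            · rw [Finset.mem_filter, Finset.mem_powerset]
              refine ⟨Finset.insert_subset_insert m (Finset.erase_subset_erase k hSsub), ?_, ?_⟩
              · by_cases hjk : j = k
                · simp [hjk]
                · simp only [hjk, if_false]
                  exact Finset.mem_insert_of_mem (Finset.mem_erase.2 ⟨hjk, hjS⟩)
              · intro hcontra
                have := hcS
                rw [hcontra, hcard] at this
                omega
            · rw [if_pos (Finset.mem_insert_self m (S.erase k)),
                Finset.erase_insert hmSe, Finset.insert_erase hkS]
            · exact ih S (by omega) k hkS m hmk hmS
          · simp only [if_neg hkS]
            refine ⟨?_, by trivial, ?_, le_refl _⟩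
            · rw [Finset.mem_filter, Finset.mem_powerset]
              refine ⟨(Finset.subset_erase.2 ⟨hSsub, hkS⟩).trans (Finset.subset_insert _ _),
                ?_, ?_⟩
              · by_cases hjk : j = k
                · exact absurd (hjk ▸ hjS) hkS
                · simpa [hjk] using hjS
              · intro hcontra
                rw [hcontra, hcard] at hSlt
                omega
            · rw [if_neg hmS]
        · -- backward direction
          intro S hS
          obtain ⟨hSp, hjS, hSne⟩ := Finset.mem_filter.1 hS
          have hSsub : S ⊆ insert m (I.erase k) := Finset.mem_powerset.1 hSp
          have hkS : k ∉ S := fun h => hknJ₁ (hSsub h)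
          have hSlt : S.card < (insert m (I.erase k)).card :=
            Finset.card_lt_card (Finset.ssubset_iff_subset_ne.2 ⟨hSsub, hSne⟩)
          by_cases hmS : m ∈ S
          · have hkSe : k ∉ S.erase m := fun h => hkS (Finset.mem_of_mem_erase h)
            have h1S : 1 ≤ S.card := Finset.card_pos.2 ⟨m, hmS⟩
            have hcS : (insert k (S.erase m)).card = S.card := by
              rw [Finset.card_insert_of_notMem hkSe, Finset.card_erase_of_mem hmS]
              omega
            simp only [if_pos hmS]
            constructor
            · rw [Finset.mem_filter, Finset.mem_powerset]
              refine ⟨?_, ?_, ?_⟩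
              · apply Finset.insert_subset hk
                have : S.erase m ⊆ (insert m (I.erase k)).erase m :=
                  Finset.erase_subset_erase m hSsub
                rw [Finset.erase_insert hmek] at this
                exact this.trans (Finset.erase_subset _ _)
              · by_cases hjk : j = k
                · exact hjk ▸ Finset.mem_insert_self _ _
                · have hjS' : j ∈ S := by simpa [hjk] using hjS
                  exact Finset.mem_insert_of_mem (Finset.mem_erase.2 ⟨hjm, hjS'⟩)
              · intro hcontra
                rw [hcontra, ← hcard] at hcS
                omega
            · rw [if_pos (Finset.mem_insert_self k (S.erase m)),
                Finset.erase_insert hkSe, Finset.insert_erase hmS]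
          · simp only [if_neg hmS]
            constructor
            · rw [Finset.mem_filter, Finset.mem_powerset]
              have hSsub' : S ⊆ I := by
                have : S ⊆ (insert m (I.erase k)).erase m :=
                  Finset.subset_erase.2 ⟨hSsub, hmS⟩
                rw [Finset.erase_insert hmek] at this
                exact this.trans (Finset.erase_subset _ _)
              refine ⟨hSsub', ?_, ?_⟩
              · by_cases hjk : j = k
                · rw [hjk] at hjS; simp at hjS; exact absurd hjS hmS
                · simpa [hjk] using hjS
              · intro hcontra
                rw [hcontra, ← hcard] at hSlt
                omega
            · rw [if_neg hkS]
  -- Claim 1: the sup is attained at min'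
  have claim1 : ∀ (J : Finset (Fin K)) (hne : J.Nonempty) (h2 : 2 ≤ J.card),
      μ J = ∑ I ∈ J.powerset.filter (fun I => J.min' hne ∈ I ∧ I ≠ J),
        φ (Jᶜ ∪ {J.min' hne}) (J \ I) / (1 - δ (Jᶜ ∪ {J.min' hne})) * μ I := by
    intro J hne h2
    have hmJ : J.min' hne ∈ J := J.min'_mem hne
    set m := J.min' hne with hm
    rw [hμrec J h2]
    apply le_antisymm
    · apply Finset.sup'_le
      intro k hk
      have hmk : m ≤ k := J.min'_le k hk
      apply key J J rfl h2 m hmJ k hk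
        (fun S => if m ∈ S then S else insert m (S.erase k))
        (fun S => if k ∈ S then S else insert k (S.erase m))
      · intro S hS
        obtain ⟨hSp, hkS, hSne⟩ := Finset.mem_filter.1 hS
        have hSsub : S ⊆ J := Finset.mem_powerset.1 hSp
        have hSlt : S.card < J.card :=
          Finset.card_lt_card (Finset.ssubset_iff_subset_ne.2 ⟨hSsub, hSne⟩)
        by_cases hmS : m ∈ S
        · simp only [if_pos hmS]
          exact ⟨Finset.mem_filter.2 ⟨hSp, hmS, hSne⟩, by trivial, by rw [if_pos hkS],
            le_refl _⟩
        · have hmk' : m ≠ k := fun h => hmS (h ▸ hkS)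
          have hmSe : m ∉ S.erase k := fun h => hmS (Finset.mem_of_mem_erase h)
          have h1S : 1 ≤ S.card := Finset.card_pos.2 ⟨k, hkS⟩
          have hcS : (insert m (S.erase k)).card = S.card := by
            rw [Finset.card_insert_of_notMem hmSe, Finset.card_erase_of_mem hkS]
            omega
          simp only [if_neg hmS]
          refine ⟨?_, hcS, ?_, ?_⟩
          · rw [Finset.mem_filter, Finset.mem_powerset]
            refine ⟨Finset.insert_subset hmJ ((Finset.erase_subset _ _).trans hSsub),
              Finset.mem_insert_self _ _, ?_⟩
            intro hcontra
            rw [hcontra] at hcS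
            omega
          · have hkne : k ∉ insert m (S.erase k) := by
              simp [Finset.mem_insert, Ne.symm hmk', Finset.notMem_erase]
            rw [if_neg hkne, Finset.erase_insert hmSe, Finset.insert_erase hkS]
          · exact claimA S.card S le_rfl k hkS m hmk hmS
      · intro S hS
        obtain ⟨hSp, hmS, hSne⟩ := Finset.mem_filter.1 hS
        have hSsub : S ⊆ J := Finset.mem_powerset.1 hSp
        have hSlt : S.card < J.card :=
          Finset.card_lt_card (Finset.ssubset_iff_subset_ne.2 ⟨hSsub, hSne⟩)
        by_cases hkS : k ∈ S
        · simp only [if_pos hkS]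
          exact ⟨Finset.mem_filter.2 ⟨hSp, hkS, hSne⟩, by rw [if_pos hmS]⟩
        · have hmk' : m ≠ k := fun h => hkS (h ▸ hmS)
          have hkSe : k ∉ S.erase m := fun h => hkS (Finset.mem_of_mem_erase h)
          have h1S : 1 ≤ S.card := Finset.card_pos.2 ⟨m, hmS⟩
          have hcS : (insert k (S.erase m)).card = S.card := by
            rw [Finset.card_insert_of_notMem hkSe, Finset.card_erase_of_mem hmS]
            omega
          simp only [if_neg hkS]
          constructor
          · rw [Finset.mem_filter, Finset.mem_powerset]
            refine ⟨Finset.insert_subset hk ((Finset.erase_subset _ _).trans hSsub),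
              Finset.mem_insert_self _ _, ?_⟩
            intro hcontra
            rw [hcontra] at hcS
            omega
          · have hmne : m ∉ insert k (S.erase m) := by
              simp [Finset.mem_insert, hmk', Finset.notMem_erase]
            rw [if_neg hmne, Finset.erase_insert hkSe, Finset.insert_erase hmS]
    · exact Finset.le_sup' (fun k => ∑ I ∈ J.powerset.filter (fun I => k ∈ I ∧ I ≠ J),
        φ (Jᶜ ∪ {k}) (J \ I) / (1 - δ (Jᶜ ∪ {k})) * μ I) hmJ
  refine ⟨fun J hJ => claim1 J _ hJ, ?_⟩
  intro J₁ J₂ h₁ h₂ hcardeq herase hminle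
  rcases eq_or_lt_of_le hminle with heq | hlt
  · have hJeq : J₁ = J₂ := by
      rw [← Finset.insert_erase (J₁.min'_mem h₁), ← Finset.insert_erase (J₂.min'_mem h₂),
        herase, heq]
    rw [hJeq]
  · have hm₁J₂ : J₁.min' h₁ ∉ J₂ := by
      intro h
      have hmem : J₁.min' h₁ ∈ J₂.erase (J₂.min' h₂) :=
        Finset.mem_erase.2 ⟨ne_of_lt hlt, h⟩
      rw [← herase] at hmem
      exact Finset.notMem_erase _ _ hmem
    have h := claimA J₂.card J₂ le_rfl (J₂.min' h₂) (J₂.min'_mem h₂) (J₁.min' h₁)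
      hminle hm₁J₂
    rwa [← herase, Finset.insert_erase (J₁.min'_mem h₁)] at h
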